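/- Let b₁,…,b_N ∈ ℝ² satisfy b₁+⋯+b_N = 0, with b_{12} ≠ 0 and B_{k1} := det(b_k, b₁) ≠ 0 for all k ≠ 1. For δ > 0 and θ ∈ [0,π] define r_δ(θ) ∈ ℝ² by its coordinates r_δ(θ)_i = Σ_{k=2}^N b_{ki}·arg(1 + b_{k2}b_{12}δe^{iθ}/B_{k1}), i = 1,2, where arg is the principal argument. Then: (a) there exists δ₀ > 0 such that r_δ(0) = r_δ(π) = (0,0) for all 0 < δ < δ₀; and (b) there exists a constant C > 0 such that |det(b₁, r_δ(θ)) − b_{12}²·δ·sin θ| ≤ Cδ² for all θ ∈ [0,π] and all 0 < δ < δ₀. In particular, det(b₁, r_δ(θ)) > 0 for all 0 < θ < π and all sufficiently small δ > 0. -/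

import Mathlib

open Finset
open scoped Real
set_option maxHeartbeats 1000000


lemma abs_arctan_sub_self_le (u : ℝ) : |Real.arctan u - u| ≤ |u| ^ 3 := by
  have key : ∀ v : ℝ, 0 ≤ v → |Real.arctan v - v| ≤ |v| ^ 3 := by
    intro v hv
    have hmono : Monotone (fun x : ℝ => Real.arctan x - x + x ^ 3) := by
      have hdiff : Differentiable ℝ (fun x : ℝ => Real.arctan x - x + x ^ 3) :=
        (Real.differentiable_arctan.sub differentiable_id).add (differentiable_pow 3)
      apply monotone_of_deriv_nonneg hdiff
      intro x
      have hd : HasDerivAt (fun x : ℝ => Real.arctan x - x + x ^ 3)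
          (1 / (1 + x ^ 2) - 1 + 3 * x ^ 2) x := by
        have h1 := (Real.hasDerivAt_arctan x).sub (hasDerivAt_id' x)
        have h2 := hasDerivAt_pow 3 x
        have := h1.add h2
        exact this.congr_deriv (by norm_num)
      rw [hd.deriv]
      have hx : (0:ℝ) < 1 + x ^ 2 := by positivity
      have : 1 / (1 + x ^ 2) - 1 + 3 * x ^ 2 = (2 * x ^ 2 + 3 * x ^ 4) / (1 + x ^ 2) := by
        field_simp; ring
      rw [this]
      positivity
    have hmono2 : Monotone (fun x : ℝ => x - Real.arctan x) := by
      have hdiff : Differentiable ℝ (fun x : ℝ => x - Real.arctan x) :=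
        differentiable_id.sub Real.differentiable_arctan
      apply monotone_of_deriv_nonneg hdiff
      intro x
      have hd : HasDerivAt (fun x : ℝ => x - Real.arctan x) (1 - 1 / (1 + x ^ 2)) x := by
        have := (hasDerivAt_id' x).sub (Real.hasDerivAt_arctan x)
        exact this
      rw [hd.deriv]
      have hx : (0:ℝ) < 1 + x ^ 2 := by positivity
      have h1 : 1 / (1 + x ^ 2) ≤ 1 := by
        rw [div_le_one hx]; nlinarith [sq_nonneg x]
      linarith
    have h1 : (0:ℝ) ≤ Real.arctan v - v + v ^ 3 := by
      have := hmono hv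
      simpa [Real.arctan_zero] using this
    have h2 : (0:ℝ) ≤ v - Real.arctan v := by
      have := hmono2 hv
      simpa using this
    rw [abs_of_nonneg hv]
    rw [abs_le]
    constructor <;> nlinarith [pow_nonneg hv 3]
  rcases le_total 0 u with h | h
  · exact key u h
  · have h' := key (-u) (by linarith)
    rw [show Real.arctan (-u) - -u = -(Real.arctan u - u) by
      rw [Real.arctan_neg]; ring, abs_neg, abs_neg] at h'
    exact h'


lemma arg_est (c δ θ : ℝ) (hδ : 0 ≤ δ) (h : |c| * δ ≤ 1/2)
    (hθ0 : 0 ≤ θ) (hθπ : θ ≤ π) :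
    |Complex.arg (1 + ((c * δ : ℝ) : ℂ) * Complex.exp (θ * Complex.I)) - c * δ * Real.sin θ|
      ≤ 8 * c ^ 2 * δ ^ 2 * Real.sin θ := by
  have habs : |c * δ| ≤ 1/2 := by rwa [abs_mul, abs_of_nonneg hδ]
  set a := c * δ with ha
  set s := Real.sin θ with hs
  have hsn : 0 ≤ s := Real.sin_nonneg_of_nonneg_of_le_pi hθ0 hθπ
  have hs1 : s ≤ 1 := Real.sin_le_one θ
  have hcos : |Real.cos θ| ≤ 1 := Real.abs_cos_le_one θ
  set z := 1 + ((a : ℝ) : ℂ) * Complex.exp (θ * Complex.I) with hz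
  have hre : z.re = 1 + a * Real.cos θ := by
    simp [hz, Complex.add_re, Complex.mul_re, Complex.exp_ofReal_mul_I_re,
      Complex.exp_ofReal_mul_I_im]
  have him : z.im = a * s := by
    simp [hz, hs, Complex.add_im, Complex.mul_im, Complex.exp_ofReal_mul_I_re,
      Complex.exp_ofReal_mul_I_im]
  have hacos : |a * Real.cos θ| ≤ 1/2 := by
    rw [abs_mul]
    calc |a| * |Real.cos θ| ≤ |a| * 1 := by
          exact mul_le_mul_of_nonneg_left hcos (abs_nonneg a)
      _ ≤ 1/2 := by simpa using habs
  have hx : (1:ℝ)/2 ≤ z.re := by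
    rw [hre]
    have := neg_abs_le (a * Real.cos θ)
    linarith
  have hx0 : (0:ℝ) < z.re := by linarith
  have harg : Complex.arg z = Real.arctan (z.im / z.re) := by
    have h1 : |Complex.arg z| < π / 2 :=
      Complex.abs_arg_lt_pi_div_two_iff.mpr (Or.inl hx0)
    rw [abs_lt] at h1
    rw [← Complex.tan_arg, Real.arctan_tan h1.1 h1.2]
  rw [harg, him, hre]
  set x := 1 + a * Real.cos θ with hxdef
  have hx' : (1:ℝ)/2 ≤ x := by rw [hre] at hx; exact hx
  have hx0' : (0:ℝ) < x := by linarith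
  set u := a * s / x with hu
  have hus : |u| ≤ 2 * |a| * s := by
    rw [hu, abs_div, abs_of_pos hx0', abs_mul, abs_of_nonneg hsn, div_le_iff₀ hx0']
    nlinarith [mul_nonneg (mul_nonneg (abs_nonneg a) hsn) (show (0:ℝ) ≤ 2*x-1 by linarith)]
  have key := abs_arctan_sub_self_le u
  have hu3 : |u| ^ 3 ≤ 4 * a ^ 2 * s := by
    have ht : 2 * |a| * s ^ 2 ≤ 1 := by
      nlinarith [mul_nonneg (abs_nonneg a) (show (0:ℝ) ≤ 1 - s^2 by nlinarith)]
    calc |u| ^ 3 ≤ (2 * |a| * s) ^ 3 := by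
          exact pow_le_pow_left₀ (abs_nonneg u) hus 3
      _ = (2 * |a| * s ^ 2) * (2 * |a|) ^ 2 * s := by ring
      _ ≤ 1 * (2 * |a|) ^ 2 * s := by
          apply mul_le_mul_of_nonneg_right _ hsn
          apply mul_le_mul_of_nonneg_right ht (by positivity)
      _ = 4 * a ^ 2 * s := by rw [show (2*|a|)^2 = 4 * |a|^2 by ring, sq_abs]; ring
  have hdiff : |u - a * s| ≤ 2 * a ^ 2 * s := by
    have heq : u - a * s = -(a * s * (a * Real.cos θ)) / x := by
      rw [hu]; field_simp; ring
    rw [heq, abs_div, abs_of_pos hx0', abs_neg, div_le_iff₀ hx0', abs_mul, abs_mul,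
      abs_of_nonneg hsn]
    have h5 : |a * Real.cos θ| ≤ |a| := by
      rw [abs_mul]
      nlinarith [abs_nonneg a]
    calc |a| * s * |a * Real.cos θ| ≤ |a| * s * |a| := by
          apply mul_le_mul_of_nonneg_left h5 (by positivity)
      _ = a ^ 2 * s := by rw [show |a| * s * |a| = |a|^2 * s by ring, sq_abs]
      _ ≤ 2 * a ^ 2 * s * x := by
          nlinarith [mul_nonneg (mul_nonneg (sq_nonneg a) hsn) (show (0:ℝ) ≤ 2*x-1 by linarith)]
  calc |Real.arctan (a * s / x) - a * s|
      ≤ |Real.arctan u - u| + |u - a * s| := by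
        rw [← hu]
        have := abs_sub_le (Real.arctan u) u (a * s)
        simpa using this
    _ ≤ 4 * a ^ 2 * s + 2 * a ^ 2 * s := by
        have := le_trans key hu3
        linarith
    _ ≤ 8 * c ^ 2 * δ ^ 2 * s := by
        have : a ^ 2 = c ^ 2 * δ ^ 2 := by rw [ha]; ring
        nlinarith [sq_nonneg a]

/-- `det(u,v) = u₁v₂ − u₂v₁` for `u, v ∈ ℝ²`. -/
def det2 (u v : ℝ × ℝ) : ℝ := u.1 * v.2 - u.2 * v.1

theorem statement12 {N : ℕ} (b : Fin (N + 1) → ℝ × ℝ)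
    (hsum : ∑ j, b j = 0)
    (hb12 : (b 0).2 ≠ 0)
    (hB : ∀ k : Fin (N + 1), k ≠ 0 → det2 (b k) (b 0) ≠ 0)
    (r : ℝ → ℝ → ℝ × ℝ)
    (hr : ∀ δ θ, r δ θ =
      (∑ k ∈ Finset.univ.erase (0 : Fin (N + 1)), (b k).1 *
        Complex.arg (1 + (((b k).2 * (b 0).2 * δ : ℝ) : ℂ) * Complex.exp (θ * Complex.I) /
          ((det2 (b k) (b 0) : ℝ) : ℂ)),
       ∑ k ∈ Finset.univ.erase (0 : Fin (N + 1)), (b k).2 *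
        Complex.arg (1 + (((b k).2 * (b 0).2 * δ : ℝ) : ℂ) * Complex.exp (θ * Complex.I) /
          ((det2 (b k) (b 0) : ℝ) : ℂ)))) :
    (∃ δ₀ > (0 : ℝ),
      (∀ δ : ℝ, 0 < δ → δ < δ₀ → r δ 0 = 0 ∧ r δ π = 0) ∧
      (∃ C > (0 : ℝ), ∀ θ ∈ Set.Icc (0 : ℝ) π, ∀ δ : ℝ, 0 < δ → δ < δ₀ →
        |det2 (b 0) (r δ θ) - (b 0).2 ^ 2 * δ * Real.sin θ| ≤ C * δ ^ 2)) ∧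
    (∃ δ₁ > (0 : ℝ), ∀ δ : ℝ, 0 < δ → δ < δ₁ → ∀ θ : ℝ, 0 < θ → θ < π →
      0 < det2 (b 0) (r δ θ)) := by
  classical
  set S : Finset (Fin (N + 1)) := Finset.univ.erase 0 with hS
  set c : Fin (N + 1) → ℝ := fun k => (b k).2 * (b 0).2 / det2 (b k) (b 0) with hc
  have hBk : ∀ k ∈ S, det2 (b k) (b 0) ≠ 0 := fun k hk =>
    hB k (Finset.ne_of_mem_erase hk)
  -- sum identity
  have hsum2 : ∑ k ∈ S, (b k).2 = -(b 0).2 := by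
    have h0 : (0 : Fin (N+1)) ∈ (Finset.univ : Finset (Fin (N+1))) := Finset.mem_univ _
    have h := Finset.add_sum_erase Finset.univ b h0
    rw [hsum] at h
    have h2 := congrArg Prod.snd h
    simp only [Prod.snd_add, Prod.snd_sum, Prod.snd_zero] at h2
    rw [hS]
    linarith [h2]
  -- rewrite of the complex argument
  have hE : ∀ k ∈ S, ∀ δ θ : ℝ,
      (1 + (((b k).2 * (b 0).2 * δ : ℝ) : ℂ) * Complex.exp (θ * Complex.I) /
          ((det2 (b k) (b 0) : ℝ) : ℂ))
        = 1 + ((c k * δ : ℝ) : ℂ) * Complex.exp (θ * Complex.I) := by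
    intro k hk δ θ
    have h0 : ((det2 (b k) (b 0) : ℝ) : ℂ) ≠ 0 := Complex.ofReal_ne_zero.mpr (hBk k hk)
    rw [hc]
    push_cast
    field_simp
  set L : ℝ := 1 + ∑ k ∈ S, |c k| with hL
  have hL1 : 1 ≤ L := by
    have : (0:ℝ) ≤ ∑ k ∈ S, |c k| := Finset.sum_nonneg fun i _ => abs_nonneg _
    rw [hL]; linarith
  have hL0 : 0 < L := by linarith
  have hcle : ∀ k ∈ S, |c k| ≤ L := by
    intro k hk
    have := Finset.single_le_sum (f := fun i => |c i|) (fun i _ => abs_nonneg _) hk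
    rw [hL]; linarith
  set C' : ℝ := ∑ k ∈ S, |det2 (b k) (b 0)| * (8 * (c k) ^ 2) with hC'
  have hC'0 : 0 ≤ C' :=
    Finset.sum_nonneg fun i _ => mul_nonneg (abs_nonneg _) (by positivity)
  set δ₀ : ℝ := 1 / (2 * L) with hδ₀
  have hδ₀pos : 0 < δ₀ := by rw [hδ₀]; positivity
  have hsmall : ∀ δ : ℝ, 0 < δ → δ < δ₀ → ∀ k ∈ S, |c k| * δ ≤ 1 / 2 := by
    intro δ hδ hδ' k hk
    have h1 : |c k| * δ ≤ L * δ := mul_le_mul_of_nonneg_right (hcle k hk) hδ.le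
    have h2 : L * δ < L * δ₀ := mul_lt_mul_of_pos_left hδ' hL0
    have h3 : L * δ₀ = 1 / 2 := by
      rw [hδ₀]; field_simp
    exact le_trans h1 (le_of_lt (h3 ▸ h2))
  -- core estimate with sin factor
  have hdet : ∀ δ θ : ℝ, det2 (b 0) (r δ θ) =
      ∑ k ∈ S, (-(det2 (b k) (b 0))) *
        Complex.arg (1 + (((b k).2 * (b 0).2 * δ : ℝ) : ℂ) * Complex.exp (θ * Complex.I) /
          ((det2 (b k) (b 0) : ℝ) : ℂ)) := by
    intro δ θ
    rw [hr]
    simp only [det2, Finset.mul_sum, hS]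
    rw [← Finset.sum_sub_distrib]
    apply Finset.sum_congr rfl
    intro k _
    ring
  have hmain : ∀ δ θ : ℝ,
      ∑ k ∈ S, (-(det2 (b k) (b 0))) * (c k * δ * Real.sin θ)
        = (b 0).2 ^ 2 * δ * Real.sin θ := by
    intro δ θ
    have h1 : ∀ k ∈ S, (-(det2 (b k) (b 0))) * (c k * δ * Real.sin θ)
        = (b k).2 * (-((b 0).2 * δ * Real.sin θ)) := by
      intro k hk
      have hck : c k * det2 (b k) (b 0) = (b k).2 * (b 0).2 := by
        rw [hc]
        exact div_mul_cancel₀ _ (hBk k hk)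
      calc (-(det2 (b k) (b 0))) * (c k * δ * Real.sin θ)
          = -(c k * det2 (b k) (b 0)) * (δ * Real.sin θ) := by ring
        _ = (b k).2 * (-((b 0).2 * δ * Real.sin θ)) := by rw [hck]; ring
    rw [Finset.sum_congr rfl h1, ← Finset.sum_mul, hsum2]
    ring
  have hcore : ∀ θ ∈ Set.Icc (0:ℝ) π, ∀ δ : ℝ, 0 < δ → δ < δ₀ →
      |det2 (b 0) (r δ θ) - (b 0).2 ^ 2 * δ * Real.sin θ| ≤ C' * δ ^ 2 * Real.sin θ := by
    intro θ hθ δ hδ hδ'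
    obtain ⟨hθ0, hθπ⟩ := hθ
    rw [hdet, ← hmain δ θ, ← Finset.sum_sub_distrib]
    have hterm : ∀ k ∈ S,
        (-(det2 (b k) (b 0))) *
          Complex.arg (1 + (((b k).2 * (b 0).2 * δ : ℝ) : ℂ) * Complex.exp (θ * Complex.I) /
            ((det2 (b k) (b 0) : ℝ) : ℂ))
          - (-(det2 (b k) (b 0))) * (c k * δ * Real.sin θ)
        = (-(det2 (b k) (b 0))) *
            (Complex.arg (1 + ((c k * δ : ℝ) : ℂ) * Complex.exp (θ * Complex.I))
              - c k * δ * Real.sin θ) := by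
      intro k hk
      rw [hE k hk]
      ring
    rw [Finset.sum_congr rfl hterm]
    calc |∑ k ∈ S, (-(det2 (b k) (b 0))) *
            (Complex.arg (1 + ((c k * δ : ℝ) : ℂ) * Complex.exp (θ * Complex.I))
              - c k * δ * Real.sin θ)|
        ≤ ∑ k ∈ S, |(-(det2 (b k) (b 0))) *
            (Complex.arg (1 + ((c k * δ : ℝ) : ℂ) * Complex.exp (θ * Complex.I))
              - c k * δ * Real.sin θ)| := Finset.abs_sum_le_sum_abs _ _
      _ ≤ ∑ k ∈ S, |det2 (b k) (b 0)| * (8 * (c k) ^ 2) * (δ ^ 2 * Real.sin θ) := by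
          apply Finset.sum_le_sum
          intro k hk
          rw [abs_mul, abs_neg]
          have hest := arg_est (c k) δ θ hδ.le (hsmall δ hδ hδ' k hk) hθ0 hθπ
          calc |det2 (b k) (b 0)| *
              |Complex.arg (1 + ((c k * δ : ℝ) : ℂ) * Complex.exp (θ * Complex.I))
                - c k * δ * Real.sin θ|
              ≤ |det2 (b k) (b 0)| * (8 * (c k) ^ 2 * δ ^ 2 * Real.sin θ) :=
                mul_le_mul_of_nonneg_left hest (abs_nonneg _)
            _ = |det2 (b k) (b 0)| * (8 * (c k) ^ 2) * (δ ^ 2 * Real.sin θ) := by ring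
      _ = C' * δ ^ 2 * Real.sin θ := by
          rw [← Finset.sum_mul, hC']
          ring
  refine ⟨⟨δ₀, hδ₀pos, ?_, ?_⟩, ?_⟩
  · -- part (a)
    intro δ hδ hδ'
    have hbig : ∀ k ∈ S, -(1:ℝ)/2 ≤ c k * δ ∧ c k * δ ≤ 1/2 := by
      intro k hk
      have h1 := hsmall δ hδ hδ' k hk
      have h2 : |c k * δ| ≤ 1/2 := by rwa [abs_mul, abs_of_nonneg hδ.le]
      rw [abs_le] at h2
      exact ⟨by linarith [h2.1], h2.2⟩
    constructor
    · rw [hr]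
      have hz : ∀ k ∈ S,
          Complex.arg (1 + (((b k).2 * (b 0).2 * δ : ℝ) : ℂ) *
            Complex.exp ((0:ℝ) * Complex.I) / ((det2 (b k) (b 0) : ℝ) : ℂ)) = 0 := by
        intro k hk
        rw [hE k hk]
        have h1 : (1 : ℂ) + ((c k * δ : ℝ) : ℂ) * Complex.exp ((0:ℝ) * Complex.I)
            = ((1 + c k * δ : ℝ) : ℂ) := by
          push_cast
          simp
        rw [h1]
        exact Complex.arg_ofReal_of_nonneg (by linarith [(hbig k hk).1])
      refine Prod.ext ?_ ?_ <;> simp only [Prod.fst_zero, Prod.snd_zero] <;>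
        (apply Finset.sum_eq_zero; intro k hk; rw [hz k hk]; ring)
    · rw [hr]
      have hz : ∀ k ∈ S,
          Complex.arg (1 + (((b k).2 * (b 0).2 * δ : ℝ) : ℂ) *
            Complex.exp ((π:ℝ) * Complex.I) / ((det2 (b k) (b 0) : ℝ) : ℂ)) = 0 := by
        intro k hk
        rw [hE k hk]
        have h1 : (1 : ℂ) + ((c k * δ : ℝ) : ℂ) * Complex.exp ((π:ℝ) * Complex.I)
            = ((1 - c k * δ : ℝ) : ℂ) := by
          rw [Complex.exp_pi_mul_I]
          push_cast
          ring
        rw [h1]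
        exact Complex.arg_ofReal_of_nonneg (by linarith [(hbig k hk).2])
      refine Prod.ext ?_ ?_ <;> simp only [Prod.fst_zero, Prod.snd_zero] <;>
        (apply Finset.sum_eq_zero; intro k hk; rw [hz k hk]; ring)
  · -- part (b)
    refine ⟨C' + 1, by linarith, ?_⟩
    intro θ hθ δ hδ hδ'
    have h1 := hcore θ hθ δ hδ hδ'
    have hs1 : Real.sin θ ≤ 1 := Real.sin_le_one θ
    have hsn : 0 ≤ Real.sin θ := Real.sin_nonneg_of_nonneg_of_le_pi hθ.1 hθ.2
    have h2 : C' * δ ^ 2 * Real.sin θ ≤ (C' + 1) * δ ^ 2 := by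
      nlinarith [sq_nonneg δ, mul_nonneg hC'0 (sq_nonneg δ)]
    linarith
  · -- part (c)
    refine ⟨min δ₀ ((b 0).2 ^ 2 / (C' + 1)), lt_min hδ₀pos (by positivity), ?_⟩
    intro δ hδ hδ' θ hθ0 hθπ
    have hδ₀' : δ < δ₀ := lt_of_lt_of_le hδ' (min_le_left _ _)
    have hδC : δ < (b 0).2 ^ 2 / (C' + 1) := lt_of_lt_of_le hδ' (min_le_right _ _)
    have hspos : 0 < Real.sin θ := Real.sin_pos_of_pos_of_lt_pi hθ0 hθπ
    have h1 := hcore θ ⟨hθ0.le, hθπ.le⟩ δ hδ hδ₀'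
    rw [abs_le] at h1
    have h2 : C' * δ < (b 0).2 ^ 2 := by
      rw [lt_div_iff₀ (by positivity : (0:ℝ) < C' + 1)] at hδC
      nlinarith
    nlinarith [h1.1, mul_pos hδ hspos]
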